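/- arXiv:0804.3825 — 4 statements merged into one kernel-verified Lean document; each statement's English description precedes it below -/
import Mathlib

section
/- Let V, X, Y1, Y2 be finitely-valued random variables, with X, Y1, Y2 Boolean-valued, such that (Y1,Y2) is conditionally independent of V given X and, conditionally on X, the pair (Y1,Y2) is distributed according to the BSSC with p = 1/2. Let η = P(X=0) and, for each v with P(V=v) > 0, let α_v = P(X=0 | V=v). Then I(V;Y2) − I(V;Y1) = Σ_v P(V=v)·f(α_v) − f(η), where f(t) = h(t/2) − h((1−t)/2) and the sum is over values v of V. -/
open MeasureTheory Real

noncomputable def prob {Ω : Type*} [MeasurableSpace Ω] (μ : Measure Ω) {A : Type*}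
    (X : Ω → A) (a : A) : ℝ :=
  (μ (X ⁻¹' {a})).toReal

noncomputable def entropy {Ω : Type*} [MeasurableSpace Ω] (μ : Measure Ω) {A : Type*}
    [Fintype A] (X : Ω → A) : ℝ :=
  ∑ a, Real.negMulLog (prob μ X a)

noncomputable def mutualInfo {Ω : Type*} [MeasurableSpace Ω] (μ : Measure Ω)
    {A B : Type*} [Fintype A] [Fintype B] (X : Ω → A) (Y : Ω → B) : ℝ :=
  entropy μ X + entropy μ Y - entropy μ (fun ω => (X ω, Y ω))

noncomputable def condMutualInfo {Ω : Type*} [MeasurableSpace Ω] (μ : Measure Ω)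
    {A B C : Type*} [Fintype A] [Fintype B] [Fintype C]
    (X : Ω → A) (Y : Ω → B) (Z : Ω → C) : ℝ :=
  entropy μ (fun ω => (X ω, Z ω)) + entropy μ (fun ω => (Y ω, Z ω))
    - entropy μ (fun ω => (X ω, Y ω, Z ω)) - entropy μ Z

/-- `W` and `Y` are conditionally independent given `X` (Markov chain `W → X → Y`). -/
def CondIndepGiven {Ω : Type*} [MeasurableSpace Ω] (μ : Measure Ω) {A B C : Type*}
    (W : Ω → A) (X : Ω → B) (Y : Ω → C) : Prop :=
  ∀ a b c, prob μ (fun ω => (W ω, X ω, Y ω)) (a, b, c) * prob μ X b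
    = prob μ (fun ω => (W ω, X ω)) (a, b) * prob μ (fun ω => (X ω, Y ω)) (b, c)

noncomputable def bsscK (x y1 y2 : Bool) : ℝ :=
  if x = false then (if y2 = false then 1 / 2 else 0)
  else (if y1 = true then 1 / 2 else 0)

def IsBSSC {Ω : Type*} [MeasurableSpace Ω] (μ : Measure Ω) (X Y1 Y2 : Ω → Bool) : Prop :=
  ∀ x y1 y2, prob μ (fun ω => (X ω, Y1 ω, Y2 ω)) (x, y1, y2) = prob μ X x * bsscK x y1 y2

noncomputable def binH (x : ℝ) : ℝ := Real.negMulLog x + Real.negMulLog (1 - x)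

noncomputable def fskew (η : ℝ) : ℝ := binH (η / 2) - binH ((1 - η) / 2)


section helpers
variable {Ω : Type*} [MeasurableSpace Ω] {μ : Measure Ω}

lemma probReal_split {B : Type*} [Fintype B] [MeasurableSpace B] [MeasurableSingletonClass B]
    [IsFiniteMeasure μ] {S : Set Ω} (hS : MeasurableSet S) {G : Ω → B} (hG : Measurable G) :
    (μ S).toReal = ∑ b, (μ (S ∩ G ⁻¹' {b})).toReal := by
  rw [← ENNReal.toReal_sum (fun b _ => measure_ne_top μ _)]
  congr 1
  have hd : Pairwise (Function.onFun Disjoint fun b => S ∩ G ⁻¹' {b}) := by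
    intro b b' hbb'
    simp only [Function.onFun, Set.disjoint_left]
    rintro ω ⟨-, hb⟩ ⟨-, hb'⟩
    simp only [Set.mem_preimage, Set.mem_singleton_iff] at hb hb'
    exact hbb' (hb ▸ hb' ▸ rfl)
  have hm : ∀ b, MeasurableSet (S ∩ G ⁻¹' {b}) :=
    fun b => hS.inter (hG (measurableSet_singleton b))
  calc μ S = μ (⋃ b, S ∩ G ⁻¹' {b}) := by congr 1; ext ω; simp
    _ = ∑' b, μ (S ∩ G ⁻¹' {b}) := measure_iUnion hd hm
    _ = ∑ b, μ (S ∩ G ⁻¹' {b}) := tsum_fintype _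

lemma toReal_mono_meas [IsFiniteMeasure μ] {S T : Set Ω} (h : S ⊆ T) :
    (μ S).toReal ≤ (μ T).toReal :=
  ENNReal.toReal_mono (measure_ne_top μ _) (measure_mono h)

end helpers


lemma key_alg (p af at' c : ℝ) (hsum : af + at' = p) (haf : af = p * c) :
    (Real.negMulLog (af / 2 + at') + Real.negMulLog (af / 2))
      - (Real.negMulLog (at' / 2) + Real.negMulLog (af + at' / 2)) = p * fskew c := by
  have hat : at' = p * (1 - c) := by
    have h : p * (1 - c) = p - p * c := by ring
    rw [haf] at hsum; linarith
  rw [show af / 2 + at' = p * ((2 - c) / 2) from by rw [haf, hat]; ring,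
    show af + at' / 2 = p * ((1 + c) / 2) from by rw [haf, hat]; ring,
    show af / 2 = p * (c / 2) from by rw [haf]; ring,
    show at' / 2 = p * ((1 - c) / 2) from by rw [hat]; ring,
    Real.negMulLog_mul, Real.negMulLog_mul, Real.negMulLog_mul, Real.negMulLog_mul]
  unfold fskew binH
  rw [show (1 : ℝ) - c / 2 = (2 - c) / 2 from by ring,
    show (1 : ℝ) - (1 - c) / 2 = (1 + c) / 2 from by ring]
  ring

/-- For `V → X → (Y₁,Y₂)` with `(Y₁,Y₂)` a BSSC (`p = 1/2`) output of `X`,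
with `η = P(X = 0)` and `α_v = P(X = 0 | V = v)` whenever `P(V = v) > 0`,
`I(V;Y₂) − I(V;Y₁) = Σ_v P(V = v) f(α_v) − f(η)` where `f(t) = h(t/2) − h((1−t)/2)`. -/
theorem stmt6 {Ω A : Type*} [MeasurableSpace Ω]
    (μ : Measure Ω) [IsProbabilityMeasure μ]
    [Fintype A] [MeasurableSpace A] [MeasurableSingletonClass A]
    (V : Ω → A) (X Y1 Y2 : Ω → Bool)
    (hV : Measurable V) (hX : Measurable X) (hY1 : Measurable Y1) (hY2 : Measurable Y2)
    (hMarkov : CondIndepGiven μ V X (fun ω => (Y1 ω, Y2 ω)))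
    (hBSSC : IsBSSC μ X Y1 Y2)
    (η : ℝ) (hη : prob μ X false = η)
    (α : A → ℝ)
    (hα : ∀ v, 0 < prob μ V v →
      prob μ (fun ω => (V ω, X ω)) (v, false) = prob μ V v * α v) :
    mutualInfo μ V Y2 - mutualInfo μ V Y1
      = (∑ v, prob μ V v * fskew (α v)) - fskew η := by
  classical
  have hnn : ∀ {B : Type _} (F : Ω → B) (t : B), 0 ≤ prob μ F t :=
    fun F t => ENNReal.toReal_nonneg
  -- step 1: joint law
  have hq : ∀ v x y1 y2, prob μ (fun ω => (V ω, X ω, Y1 ω, Y2 ω)) (v, x, y1, y2)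
      = prob μ (fun ω => (V ω, X ω)) (v, x) * bsscK x y1 y2 := by
    intro v x y1 y2
    by_cases hx : prob μ X x = 0
    · have hs1 : (fun ω => (V ω, X ω, Y1 ω, Y2 ω)) ⁻¹' {(v, x, y1, y2)} ⊆ X ⁻¹' {x} := by
        intro ω h; simp [Prod.ext_iff] at h ⊢; tauto
      have hs2 : (fun ω => (V ω, X ω)) ⁻¹' {(v, x)} ⊆ X ⁻¹' {x} := by
        intro ω h; simp [Prod.ext_iff] at h ⊢; tauto
      have h1 : prob μ (fun ω => (V ω, X ω, Y1 ω, Y2 ω)) (v, x, y1, y2) = 0 :=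
        le_antisymm (hx ▸ toReal_mono_meas hs1) (hnn _ _)
      have h2 : prob μ (fun ω => (V ω, X ω)) (v, x) = 0 :=
        le_antisymm (hx ▸ toReal_mono_meas hs2) (hnn _ _)
      rw [h1, h2, zero_mul]
    · have hm := hMarkov v x (y1, y2)
      simp only at hm
      rw [hBSSC x y1 y2] at hm
      apply mul_right_cancel₀ hx
      rw [hm]; ring
  -- marginalization lemmas
  have hVY1 : ∀ v y1, prob μ (fun ω => (V ω, Y1 ω)) (v, y1)
      = ∑ x, ∑ y2, prob μ (fun ω => (V ω, X ω, Y1 ω, Y2 ω)) (v, x, y1, y2) := by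
    intro v y1
    have e0 : prob μ (fun ω => (V ω, Y1 ω)) (v, y1)
        = (μ (V ⁻¹' {v} ∩ Y1 ⁻¹' {y1})).toReal := by
      unfold prob
      exact congrArg (fun s => (μ s).toReal) (by
        ext ω
        simp only [Set.mem_preimage, Set.mem_singleton_iff, Set.mem_inter_iff,
          Prod.ext_iff] <;> tauto)
    rw [e0, probReal_split ((hV (measurableSet_singleton v)).inter
        (hY1 (measurableSet_singleton y1))) hX]
    refine Finset.sum_congr rfl fun x _ => ?_
    rw [probReal_split (((hV (measurableSet_singleton v)).inter
        (hY1 (measurableSet_singleton y1))).inter (hX (measurableSet_singleton x))) hY2]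
    refine Finset.sum_congr rfl fun y2 _ => ?_
    unfold prob
    exact congrArg (fun s => (μ s).toReal) (by
      ext ω
      simp only [Set.mem_preimage, Set.mem_singleton_iff, Set.mem_inter_iff,
        Prod.ext_iff] <;> tauto)
  have hVY2 : ∀ v y2, prob μ (fun ω => (V ω, Y2 ω)) (v, y2)
      = ∑ x, ∑ y1, prob μ (fun ω => (V ω, X ω, Y1 ω, Y2 ω)) (v, x, y1, y2) := by
    intro v y2
    have e0 : prob μ (fun ω => (V ω, Y2 ω)) (v, y2)
        = (μ (V ⁻¹' {v} ∩ Y2 ⁻¹' {y2})).toReal := by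
      unfold prob
      exact congrArg (fun s => (μ s).toReal) (by
        ext ω
        simp only [Set.mem_preimage, Set.mem_singleton_iff, Set.mem_inter_iff,
          Prod.ext_iff] <;> tauto)
    rw [e0, probReal_split ((hV (measurableSet_singleton v)).inter
        (hY2 (measurableSet_singleton y2))) hX]
    refine Finset.sum_congr rfl fun x _ => ?_
    rw [probReal_split (((hV (measurableSet_singleton v)).inter
        (hY2 (measurableSet_singleton y2))).inter (hX (measurableSet_singleton x))) hY1]
    refine Finset.sum_congr rfl fun y1 _ => ?_
    unfold prob
    exact congrArg (fun s => (μ s).toReal) (by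
      ext ω
      simp only [Set.mem_preimage, Set.mem_singleton_iff, Set.mem_inter_iff,
        Prod.ext_iff] <;> tauto)
  have hY1m : ∀ y1, prob μ Y1 y1 = ∑ v, prob μ (fun ω => (V ω, Y1 ω)) (v, y1) := by
    intro y1
    rw [show prob μ Y1 y1 = (μ (Y1 ⁻¹' {y1})).toReal from rfl,
      probReal_split (hY1 (measurableSet_singleton y1)) hV]
    refine Finset.sum_congr rfl fun v _ => ?_
    unfold prob
    exact congrArg (fun s => (μ s).toReal) (by
      ext ω
      simp only [Set.mem_preimage, Set.mem_singleton_iff, Set.mem_inter_iff,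
        Prod.ext_iff] <;> tauto)
  have hY2m : ∀ y2, prob μ Y2 y2 = ∑ v, prob μ (fun ω => (V ω, Y2 ω)) (v, y2) := by
    intro y2
    rw [show prob μ Y2 y2 = (μ (Y2 ⁻¹' {y2})).toReal from rfl,
      probReal_split (hY2 (measurableSet_singleton y2)) hV]
    refine Finset.sum_congr rfl fun v _ => ?_
    unfold prob
    exact congrArg (fun s => (μ s).toReal) (by
      ext ω
      simp only [Set.mem_preimage, Set.mem_singleton_iff, Set.mem_inter_iff,
        Prod.ext_iff] <;> tauto)
  have hXm : ∀ x, prob μ X x = ∑ v, prob μ (fun ω => (V ω, X ω)) (v, x) := by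
    intro x
    rw [show prob μ X x = (μ (X ⁻¹' {x})).toReal from rfl,
      probReal_split (hX (measurableSet_singleton x)) hV]
    refine Finset.sum_congr rfl fun v _ => ?_
    unfold prob
    exact congrArg (fun s => (μ s).toReal) (by
      ext ω
      simp only [Set.mem_preimage, Set.mem_singleton_iff, Set.mem_inter_iff,
        Prod.ext_iff] <;> tauto)
  have hVm : ∀ v, prob μ V v = ∑ x, prob μ (fun ω => (V ω, X ω)) (v, x) := by
    intro v
    rw [show prob μ V v = (μ (V ⁻¹' {v})).toReal from rfl,
      probReal_split (hV (measurableSet_singleton v)) hX]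
    refine Finset.sum_congr rfl fun x _ => ?_
    unfold prob
    exact congrArg (fun s => (μ s).toReal) (by
      ext ω
      simp only [Set.mem_preimage, Set.mem_singleton_iff, Set.mem_inter_iff,
        Prod.ext_iff] <;> tauto)
  have htot : prob μ X true + prob μ X false = 1 := by
    have h := probReal_split (μ := μ) MeasurableSet.univ hX
    simp only [Set.univ_inter, measure_univ, ENNReal.toReal_one, Fintype.sum_bool] at h
    exact h.symm
  -- closed forms for the joint (V, Y_i) distributions
  have hb1f : ∀ v, prob μ (fun ω => (V ω, Y1 ω)) (v, false)
      = prob μ (fun ω => (V ω, X ω)) (v, false) / 2 := by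
    intro v; rw [hVY1 v false]
    simp [hq, bsscK, Fintype.sum_bool]; ring
  have hb1t : ∀ v, prob μ (fun ω => (V ω, Y1 ω)) (v, true)
      = prob μ (fun ω => (V ω, X ω)) (v, false) / 2
        + prob μ (fun ω => (V ω, X ω)) (v, true) := by
    intro v; rw [hVY1 v true]
    simp [hq, bsscK, Fintype.sum_bool]; ring
  have hb2f : ∀ v, prob μ (fun ω => (V ω, Y2 ω)) (v, false)
      = prob μ (fun ω => (V ω, X ω)) (v, false)
        + prob μ (fun ω => (V ω, X ω)) (v, true) / 2 := by
    intro v; rw [hVY2 v false]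
    simp [hq, bsscK, Fintype.sum_bool]; ring
  have hb2t : ∀ v, prob μ (fun ω => (V ω, Y2 ω)) (v, true)
      = prob μ (fun ω => (V ω, X ω)) (v, true) / 2 := by
    intro v; rw [hVY2 v true]
    simp [hq, bsscK, Fintype.sum_bool]; ring
  -- marginals of Y1, Y2
  have hXt : prob μ X true = 1 - η := by rw [hη] at htot; linarith
  have pY1f : prob μ Y1 false = η / 2 := by
    rw [hY1m false]
    simp only [hb1f]
    rw [← Finset.sum_div, ← hXm false, hη]
  have pY1t : prob μ Y1 true = 1 - η / 2 := by
    rw [hY1m true]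
    simp only [hb1t]
    rw [Finset.sum_add_distrib, ← Finset.sum_div, ← hXm false, ← hXm true, hη, hXt]
    ring
  have pY2f : prob μ Y2 false = (1 + η) / 2 := by
    rw [hY2m false]
    simp only [hb2f]
    rw [Finset.sum_add_distrib, ← Finset.sum_div, ← hXm false, ← hXm true, hη, hXt]
    ring
  have pY2t : prob μ Y2 true = (1 - η) / 2 := by
    rw [hY2m true]
    simp only [hb2t]
    rw [← Finset.sum_div, ← hXm true, hXt]
  -- entropies
  have hEY1 : entropy μ Y1 = negMulLog (1 - η / 2) + negMulLog (η / 2) := by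
    unfold entropy; rw [Fintype.sum_bool, pY1t, pY1f]
  have hEY2 : entropy μ Y2 = negMulLog ((1 - η) / 2) + negMulLog ((1 + η) / 2) := by
    unfold entropy; rw [Fintype.sum_bool, pY2t, pY2f]
  have hEVY1 : entropy μ (fun ω => (V ω, Y1 ω))
      = ∑ v, (negMulLog (prob μ (fun ω => (V ω, X ω)) (v, false) / 2
          + prob μ (fun ω => (V ω, X ω)) (v, true))
        + negMulLog (prob μ (fun ω => (V ω, X ω)) (v, false) / 2)) := by
    unfold entropy; rw [Fintype.sum_prod_type]
    refine Finset.sum_congr rfl fun v _ => ?_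
    rw [Fintype.sum_bool, hb1t v, hb1f v]
  have hEVY2 : entropy μ (fun ω => (V ω, Y2 ω))
      = ∑ v, (negMulLog (prob μ (fun ω => (V ω, X ω)) (v, true) / 2)
        + negMulLog (prob μ (fun ω => (V ω, X ω)) (v, false)
          + prob μ (fun ω => (V ω, X ω)) (v, true) / 2)) := by
    unfold entropy; rw [Fintype.sum_prod_type]
    refine Finset.sum_congr rfl fun v _ => ?_
    rw [Fintype.sum_bool, hb2t v, hb2f v]
  -- per-v identity
  have hsum_v : ∀ v, prob μ (fun ω => (V ω, X ω)) (v, false)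
      + prob μ (fun ω => (V ω, X ω)) (v, true) = prob μ V v := by
    intro v; rw [hVm v, Fintype.sum_bool]; ring
  have key : ∀ v,
      (negMulLog (prob μ (fun ω => (V ω, X ω)) (v, false) / 2
          + prob μ (fun ω => (V ω, X ω)) (v, true))
        + negMulLog (prob μ (fun ω => (V ω, X ω)) (v, false) / 2))
      - (negMulLog (prob μ (fun ω => (V ω, X ω)) (v, true) / 2)
        + negMulLog (prob μ (fun ω => (V ω, X ω)) (v, false)
          + prob μ (fun ω => (V ω, X ω)) (v, true) / 2))
      = prob μ V v * fskew (α v) := by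
    intro v
    have hafn : 0 ≤ prob μ (fun ω => (V ω, X ω)) (v, false) := hnn _ _
    have hatn : 0 ≤ prob μ (fun ω => (V ω, X ω)) (v, true) := hnn _ _
    have hsum := hsum_v v
    rcases (hnn V v).eq_or_lt with h0 | hp
    · have h1 : prob μ (fun ω => (V ω, X ω)) (v, false) = 0 := by linarith
      have h2 : prob μ (fun ω => (V ω, X ω)) (v, true) = 0 := by linarith
      rw [h1, h2, ← h0]
      norm_num [negMulLog_zero]
    · exact key_alg _ _ _ _ hsum (hα v hp)
  -- assembly
  have hB : entropy μ (fun ω => (V ω, Y1 ω)) - entropy μ (fun ω => (V ω, Y2 ω))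
      = ∑ v, prob μ V v * fskew (α v) := by
    rw [hEVY1, hEVY2, ← Finset.sum_sub_distrib]
    exact Finset.sum_congr rfl fun v _ => key v
  have hA : entropy μ Y2 - entropy μ Y1 = - fskew η := by
    rw [hEY1, hEY2]
    unfold fskew binH
    rw [show (1 : ℝ) - (1 - η) / 2 = (1 + η) / 2 from by ring]
    ring
  unfold mutualInfo
  linarith
end

section
/- Let f(η) = h(η/2) − h((1−η)/2). Then η0 = 1/5 satisfies the tangency equation f'(η0) = (log 2 − f(η0))/(1 − η0), where f'(η) = (1/2)·log((2−η)/η) + (1/2)·log((1+η)/(1−η)) is the derivative of f on (0,1); moreover η0 = 1/5 is the unique solution of this equation in the interval (0, 1/2]. (Equivalently, the line joining the point (1/5, f(1/5)) to the point (1, log 2) = (1, f(1)) is tangent to the graph of f at η = 1/5.) -/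
open MeasureTheory Real

/-- The derivative of `fskew` on `(0,1)`. -/
noncomputable def fskewDeriv (η : ℝ) : ℝ :=
  (1 / 2) * Real.log ((2 - η) / η) + (1 / 2) * Real.log ((1 + η) / (1 - η))

lemma hasDerivAt_binH_aux {x : ℝ} (hx : x ≠ 0) (hx1 : (1:ℝ) - x ≠ 0) :
    HasDerivAt binH (Real.log (1 - x) - Real.log x) x := by
  have h1 := Real.hasDerivAt_negMulLog hx
  have h2 : HasDerivAt (fun y : ℝ => Real.negMulLog (1 - y))
      ((-Real.log (1 - x) - 1) * (-1)) x :=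
    (Real.hasDerivAt_negMulLog hx1).comp x (((hasDerivAt_id x).const_sub 1))
  have := h1.add h2
  refine this.congr_deriv ?_
  ring

lemma hasDerivAt_fskew_aux {η : ℝ} (hη : η ∈ Set.Ioo (0:ℝ) 1) :
    HasDerivAt fskew (fskewDeriv η) η := by
  obtain ⟨h0, h1⟩ := hη
  have p2 : (0:ℝ) < 2 - η := by linarith
  have p1m : (0:ℝ) < 1 - η := by linarith
  have p1p : (0:ℝ) < 1 + η := by linarith
  have hA : HasDerivAt (fun y : ℝ => binH (y / 2))
      ((Real.log (1 - η/2) - Real.log (η/2)) * (1/2)) η := by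
    have inner : HasDerivAt (fun y : ℝ => y / 2) (1/2) η := by
      simpa using (hasDerivAt_id η).div_const 2
    exact (hasDerivAt_binH_aux (by positivity)
      (by rw [show (1:ℝ) - η/2 = (2-η)/2 by ring]; positivity)).comp η inner
  have hB : HasDerivAt (fun y : ℝ => binH ((1 - y) / 2))
      ((Real.log (1 - (1-η)/2) - Real.log ((1-η)/2)) * (-(1/2))) η := by
    have inner : HasDerivAt (fun y : ℝ => (1 - y) / 2) (-(1/2)) η := by
      have := ((hasDerivAt_id η).const_sub 1).div_const 2
      norm_num at this ⊢; exact this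
    exact (hasDerivAt_binH_aux (by positivity)
      (by rw [show (1:ℝ) - (1-η)/2 = (1+η)/2 by ring]; positivity)).comp η inner
  have := hA.sub hB
  refine this.congr_deriv ?_
  have e1 : (1:ℝ) - η/2 = (2-η)/2 := by ring
  have e2 : (1:ℝ) - (1-η)/2 = (1+η)/2 := by ring
  rw [fskewDeriv, e1, e2,
    Real.log_div p2.ne' two_ne_zero, Real.log_div h0.ne' two_ne_zero,
    Real.log_div p1p.ne' two_ne_zero, Real.log_div p1m.ne' two_ne_zero,
    Real.log_div p2.ne' h0.ne', Real.log_div p1p.ne' p1m.ne']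
  ring

lemma tangency_aux : fskewDeriv (1 / 5) = (Real.log 2 - fskew (1 / 5)) / (1 - 1 / 5) := by
  have l10 : Real.log (1/10 : ℝ) = -(Real.log 2 + Real.log 5) := by
    rw [show (1/10 : ℝ) = (2 * 5)⁻¹ by norm_num, Real.log_inv, Real.log_mul] <;> norm_num
  have l910 : Real.log (9/10 : ℝ) = 2 * Real.log 3 - (Real.log 2 + Real.log 5) := by
    rw [show (9/10 : ℝ) = 3^2 / (2 * 5) by norm_num, Real.log_div, Real.log_pow,
      Real.log_mul] <;> norm_num
  have l25 : Real.log (2/5 : ℝ) = Real.log 2 - Real.log 5 := by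
    rw [Real.log_div] <;> norm_num
  have l35 : Real.log (3/5 : ℝ) = Real.log 3 - Real.log 5 := by
    rw [Real.log_div] <;> norm_num
  have l9 : Real.log (9 : ℝ) = 2 * Real.log 3 := by
    rw [show (9:ℝ) = 3^2 by norm_num, Real.log_pow]; norm_num
  have l32 : Real.log (3/2 : ℝ) = Real.log 3 - Real.log 2 := by
    rw [Real.log_div] <;> norm_num
  have e1 : ((2:ℝ) - 1/5) / (1/5) = 9 := by norm_num
  have e2 : ((1:ℝ) + 1/5) / (1 - 1/5) = 3/2 := by norm_num
  rw [fskewDeriv, fskew, binH, binH, e1, e2]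
  norm_num [Real.negMulLog]
  rw [l10, l910, l25, l35, l9, l32]
  ring

/-- second derivative expression -/
noncomputable def fskewD2 (η : ℝ) : ℝ :=
  (1/2) * (-(1/(2-η)) - 1/η) + (1/2) * (1/(1+η) + 1/(1-η))

lemma hasDerivAt_fskewDeriv_aux {η : ℝ} (hη : η ∈ Set.Ioo (0:ℝ) 1) :
    HasDerivAt fskewDeriv (fskewD2 η) η := by
  obtain ⟨h0, h1⟩ := hη
  have p2 : (0:ℝ) < 2 - η := by linarith
  have p1m : (0:ℝ) < 1 - η := by linarith
  have p1p : (0:ℝ) < 1 + η := by linarith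
  have hF : HasDerivAt (fun y : ℝ =>
      (1/2) * (Real.log (2 - y) - Real.log y) + (1/2) * (Real.log (1 + y) - Real.log (1 - y)))
      (fskewD2 η) η := by
    have hA : HasDerivAt (fun y : ℝ => Real.log (2 - y)) ((2-η)⁻¹ * (-1)) η :=
      (Real.hasDerivAt_log p2.ne').comp η ((hasDerivAt_id η).const_sub 2)
    have hB : HasDerivAt (fun y : ℝ => Real.log y) η⁻¹ η := Real.hasDerivAt_log h0.ne'
    have hC : HasDerivAt (fun y : ℝ => Real.log (1 + y)) ((1+η)⁻¹ * 1) η :=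
      (Real.hasDerivAt_log p1p.ne').comp η ((hasDerivAt_id η).const_add 1)
    have hD : HasDerivAt (fun y : ℝ => Real.log (1 - y)) ((1-η)⁻¹ * (-1)) η :=
      (Real.hasDerivAt_log p1m.ne').comp η ((hasDerivAt_id η).const_sub 1)
    have := (((hA.sub hB).const_mul (1/2:ℝ)).add ((hC.sub hD).const_mul (1/2:ℝ)))
    refine this.congr_deriv ?_
    rw [fskewD2]; field_simp
    ring
  apply hF.congr_of_eventuallyEq
  filter_upwards [Ioo_mem_nhds h0 h1] with y hy
  obtain ⟨hy0, hy1⟩ := hy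
  rw [fskewDeriv, Real.log_div (by linarith : (2:ℝ)-y ≠ 0) hy0.ne',
    Real.log_div (by linarith : (1:ℝ)+y ≠ 0) (by linarith : (1:ℝ)-y ≠ 0)]

/-- tangency gap function -/
noncomputable def gGap (η : ℝ) : ℝ := (1 - η) * fskewDeriv η + fskew η - Real.log 2

lemma hasDerivAt_gGap {η : ℝ} (hη : η ∈ Set.Ioo (0:ℝ) 1) :
    HasDerivAt gGap ((1 - η) * fskewD2 η) η := by
  have h1 : HasDerivAt (fun y : ℝ => (1 - y) * fskewDeriv y)
      ((-1) * fskewDeriv η + (1 - η) * fskewD2 η) η :=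
    ((hasDerivAt_id η).const_sub 1).mul (hasDerivAt_fskewDeriv_aux hη)
  have := (h1.add (hasDerivAt_fskew_aux hη)).sub_const (Real.log 2)
  refine this.congr_deriv ?_
  ring

lemma gGap_deriv_neg {η : ℝ} (h0 : 0 < η) (h1 : η < 1/2) :
    deriv gGap η < 0 := by
  rw [(hasDerivAt_gGap ⟨h0, by linarith⟩).deriv]
  have p2 : (0:ℝ) < 2 - η := by linarith
  have p1m : (0:ℝ) < 1 - η := by linarith
  have p1p : (0:ℝ) < 1 + η := by linarith
  have key : (1:ℝ)/(1+η) + 1/(1-η) < 1/(2-η) + 1/η := by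
    rw [div_add_div _ _ p1p.ne' p1m.ne', div_add_div _ _ p2.ne' h0.ne',
      div_lt_div_iff₀ (by positivity) (by positivity)]
    nlinarith
  have : fskewD2 η < 0 := by
    rw [fskewD2]; nlinarith
  nlinarith

lemma gGap_strictAnti : StrictAntiOn gGap (Set.Ioc (0:ℝ) (1/2)) := by
  apply strictAntiOn_of_deriv_neg (convex_Ioc 0 (1/2))
  · intro x hx
    exact (hasDerivAt_gGap ⟨hx.1, by linarith [hx.2]⟩).continuousAt.continuousWithinAt
  · rw [interior_Ioc]
    intro x hx
    exact gGap_deriv_neg hx.1 hx.2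

/-- `fskewDeriv` is the derivative of `f` on `(0,1)`; `η₀ = 1/5`
satisfies the tangency equation `f'(η₀) = (log 2 − f(η₀))/(1 − η₀)`, and it is the
unique solution of this equation in `(0, 1/2]`. -/
theorem stmt8 :
    (∀ η ∈ Set.Ioo (0 : ℝ) 1, HasDerivAt fskew (fskewDeriv η) η) ∧
    fskewDeriv (1 / 5) = (Real.log 2 - fskew (1 / 5)) / (1 - 1 / 5) ∧
    (∀ η ∈ Set.Ioc (0 : ℝ) (1 / 2),
      fskewDeriv η = (Real.log 2 - fskew η) / (1 - η) → η = 1 / 5) := by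
  refine ⟨fun η hη => hasDerivAt_fskew_aux hη, tangency_aux, ?_⟩
  intro η hη heq
  have h15 : (1/5 : ℝ) ∈ Set.Ioc (0:ℝ) (1/2) := by constructor <;> norm_num
  have hne : (1:ℝ) - η ≠ 0 := by have := hη.2; intro h; norm_num at h; linarith
  have hg : gGap η = 0 := by
    rw [gGap]
    rw [eq_div_iff hne] at heq
    linarith
  have hg15 : gGap (1/5) = 0 := by
    have := tangency_aux
    rw [eq_div_iff (by norm_num : (1:ℝ) - 1/5 ≠ 0)] at this
    rw [gGap]; linarith
  exact gGap_strictAnti.injOn hη h15 (hg.trans hg15.symm)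
end

section
/- Let f(η) = h(η/2) − h((1−η)/2) and define g : [0,1] → ℝ by g(η) = f(η) for 0 ≤ η ≤ 1/5, and g(η) = ((1−η)/(4/5))·f(1/5) + ((η−1/5)/(4/5))·log 2 for 1/5 ≤ η ≤ 1 (the chord from (1/5, f(1/5)) to (1, log 2)). Then g is concave on [0,1] and f(η) ≤ g(η) for all η ∈ [0,1]. -/
open MeasureTheory Real

/-- The concave envelope: `f` on `[0,1/5]`, followed by the chord from
`(1/5, f(1/5))` to `(1, log 2)`. -/
noncomputable def gskew (η : ℝ) : ℝ :=
  if η ≤ 1 / 5 then fskew η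
  else ((1 - η) / (4 / 5)) * fskew (1 / 5) + ((η - 1 / 5) / (4 / 5)) * Real.log 2

/-! ### Auxiliary definitions and lemmas -/

/-- The derivative of `fskew` on `(0,1)`. -/
noncomputable def fd (η : ℝ) : ℝ :=
  (Real.log (2 - η) - Real.log η + Real.log (1 + η) - Real.log (1 - η)) / 2

/-- The second derivative of `fskew` on `(0,1)`. -/
noncomputable def fdd (η : ℝ) : ℝ :=
  (1 / (1 + η) + 1 / (1 - η) - 1 / (2 - η) - 1 / η) / 2

/-- The tangent line to `fskew` at `1/5` (which is also the chord to `(1, log 2)`). -/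
noncomputable def lfun (η : ℝ) : ℝ := fskew (1/5) + fd (1/5) * (η - 1/5)

lemma continuous_fskew : Continuous fskew := by
  unfold fskew binH
  fun_prop

lemma hasDerivAt_fskew {η : ℝ} (h1 : 0 < η) (h2 : η < 1) : HasDerivAt fskew (fd η) η := by
  have e1 : η / 2 ≠ 0 := by positivity
  have e2 : (1 : ℝ) - η / 2 ≠ 0 := by intro h; nlinarith
  have e3 : (1 - η) / 2 ≠ 0 := by intro h; nlinarith [div_eq_zero_iff.mp h]
  have e3' : ((1 : ℝ) - η) / 2 > 0 := by linarith
  have e4 : (1 : ℝ) - (1 - η) / 2 ≠ 0 := by intro h; nlinarith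
  have i1 : HasDerivAt (fun t : ℝ => t / 2) (1 / 2) η := by
    simpa using (hasDerivAt_id η).div_const 2
  have i2 : HasDerivAt (fun t : ℝ => 1 - t / 2) (-(1 / 2)) η := by
    simpa using i1.const_sub 1
  have i3 : HasDerivAt (fun t : ℝ => (1 - t) / 2) (-(1 / 2)) η := by
    have h := ((hasDerivAt_id η).const_sub 1).div_const 2
    exact h.congr_deriv (by norm_num)
  have i4 : HasDerivAt (fun t : ℝ => 1 - (1 - t) / 2) (1 / 2) η := by
    have h := i3.const_sub 1
    exact h.congr_deriv (by norm_num)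
  have c1 : HasDerivAt (fun t : ℝ => Real.negMulLog (t / 2))
      ((-Real.log (η / 2) - 1) * (1 / 2)) η := by
    have := (Real.hasDerivAt_negMulLog e1).comp η i1
    exact this
  have c2 : HasDerivAt (fun t : ℝ => Real.negMulLog (1 - t / 2))
      ((-Real.log (1 - η / 2) - 1) * (-(1 / 2))) η := by
    have := (Real.hasDerivAt_negMulLog e2).comp η i2
    exact this
  have c3 : HasDerivAt (fun t : ℝ => Real.negMulLog ((1 - t) / 2))
      ((-Real.log ((1 - η) / 2) - 1) * (-(1 / 2))) η := by
    have := (Real.hasDerivAt_negMulLog e3).comp η i3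
    exact this
  have c4 : HasDerivAt (fun t : ℝ => Real.negMulLog (1 - (1 - t) / 2))
      ((-Real.log (1 - (1 - η) / 2) - 1) * (1 / 2)) η := by
    have := (Real.hasDerivAt_negMulLog e4).comp η i4
    exact this
  have total := (c1.add c2).sub (c3.add c4)
  have hfun : fskew = fun t : ℝ => Real.negMulLog (t / 2) + Real.negMulLog (1 - t / 2)
      - (Real.negMulLog ((1 - t) / 2) + Real.negMulLog (1 - (1 - t) / 2)) := by
    funext t; simp [fskew, binH]
  rw [hfun]
  refine total.congr_deriv ?_
  have l1 : Real.log (η / 2) = Real.log η - Real.log 2 :=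
    Real.log_div (ne_of_gt h1) two_ne_zero
  have l2 : Real.log (1 - η / 2) = Real.log (2 - η) - Real.log 2 := by
    rw [show (1 : ℝ) - η / 2 = (2 - η) / 2 by ring]
    exact Real.log_div (by linarith) two_ne_zero
  have l3 : Real.log ((1 - η) / 2) = Real.log (1 - η) - Real.log 2 :=
    Real.log_div (by linarith) two_ne_zero
  have l4 : Real.log (1 - (1 - η) / 2) = Real.log (1 + η) - Real.log 2 := by
    rw [show (1 : ℝ) - (1 - η) / 2 = (1 + η) / 2 by ring]
    exact Real.log_div (by linarith) two_ne_zero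
  rw [fd, l1, l2, l3, l4]
  ring

lemma hasDerivAt_fd {η : ℝ} (h1 : 0 < η) (h2 : η < 1) : HasDerivAt fd (fdd η) η := by
  have t1 : HasDerivAt (fun t : ℝ => Real.log (2 - t)) ((-1) / (2 - η)) η :=
    (((hasDerivAt_id η).const_sub 2).log (by intro h; simp only [id_eq] at h; nlinarith))
  have t2 : HasDerivAt (fun t : ℝ => Real.log t) (1 / η) η := by
    simpa using (hasDerivAt_id η).log (ne_of_gt h1)
  have t3 : HasDerivAt (fun t : ℝ => Real.log (1 + t)) (1 / (1 + η)) η := by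
    simpa using ((hasDerivAt_id η).const_add 1).log (by intro h; simp only [id_eq] at h; nlinarith)
  have t4 : HasDerivAt (fun t : ℝ => Real.log (1 - t)) ((-1) / (1 - η)) η :=
    ((hasDerivAt_id η).const_sub 1).log (by intro h; simp only [id_eq] at h; nlinarith)
  have total := (((t1.sub t2).add t3).sub t4).div_const 2
  have hfun : fd = fun t : ℝ => (Real.log (2 - t) - Real.log t + Real.log (1 + t)
      - Real.log (1 - t)) / 2 := rfl
  rw [hfun]
  refine total.congr_deriv ?_
  rw [fdd]; ring

lemma fdd_nonpos {η : ℝ} (h1 : 0 < η) (h2 : η ≤ 1/2) : fdd η ≤ 0 := by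
  have p1 : (0:ℝ) < 2 - η := by linarith
  have p2 : (0:ℝ) < 1 + η := by linarith
  have p3 : (0:ℝ) < 1 - η := by linarith
  rw [fdd]
  have key : 1 / (1 + η) + 1 / (1 - η) ≤ 1 / (2 - η) + 1 / η := by
    rw [div_add_div _ _ (ne_of_gt p2) (ne_of_gt p3), div_add_div _ _ (ne_of_gt p1) (ne_of_gt h1),
      div_le_div_iff₀ (by positivity) (by positivity)]
    nlinarith
  linarith

lemma fdd_nonneg {η : ℝ} (h1 : 1/2 ≤ η) (h2 : η < 1) : 0 ≤ fdd η := by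
  have h0 : (0:ℝ) < η := by linarith
  have p1 : (0:ℝ) < 2 - η := by linarith
  have p2 : (0:ℝ) < 1 + η := by linarith
  have p3 : (0:ℝ) < 1 - η := by linarith
  rw [fdd]
  have key : 1 / (2 - η) + 1 / η ≤ 1 / (1 + η) + 1 / (1 - η) := by
    rw [div_add_div _ _ (ne_of_gt p2) (ne_of_gt p3), div_add_div _ _ (ne_of_gt p1) (ne_of_gt h0),
      div_le_div_iff₀ (by positivity) (by positivity)]
    nlinarith
  linarith

lemma fd_anti : AntitoneOn fd (Set.Ioc 0 (1/2 : ℝ)) := by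
  apply antitoneOn_of_hasDerivWithinAt_nonpos (f' := fdd) (convex_Ioc _ _)
  · intro x hx
    exact (hasDerivAt_fd hx.1 (by linarith [hx.2])).continuousAt.continuousWithinAt
  · intro x hx
    rw [interior_Ioc] at hx
    exact (hasDerivAt_fd hx.1 (by linarith [hx.2])).hasDerivWithinAt
  · intro x hx
    rw [interior_Ioc] at hx
    exact fdd_nonpos hx.1 hx.2.le

/-- Tangent lines at points of `(0, 1/5]` lie above `fskew` on `[0, 1/2]`. -/
lemma tangent_le {z w : ℝ} (hz0 : 0 < z) (hz5 : z ≤ 1/5) (hw0 : 0 ≤ w) (hw2 : w ≤ 1/2) :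
    fskew w ≤ fskew z + fd z * (w - z) := by
  set E : ℝ → ℝ := fun t => fskew z + fd z * (t - z) - fskew t with hE
  have hEz : E z = 0 := by simp [hE]
  have hd : ∀ t ∈ Set.Ioo (0:ℝ) 1, HasDerivAt E (fd z - fd t) t := by
    intro t ht
    have lin : HasDerivAt (fun t : ℝ => fskew z + fd z * (t - z)) (fd z) t := by
      simpa using (((hasDerivAt_id t).sub_const z).const_mul (fd z)).const_add (fskew z)
    exact lin.sub (hasDerivAt_fskew ht.1 ht.2)
  have hcont : Continuous E := by
    apply Continuous.sub _ continuous_fskew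
    fun_prop
  have hzmem : z ∈ Set.Ioc (0:ℝ) (1/2) := ⟨hz0, by linarith⟩
  suffices h : 0 ≤ E w by simp only [hE] at h; linarith
  rcases le_total w z with hwz | hwz
  · have hanti : AntitoneOn E (Set.Icc 0 z) := by
      apply antitoneOn_of_hasDerivWithinAt_nonpos (f' := fun t => fd z - fd t) (convex_Icc _ _)
        hcont.continuousOn
      · intro t ht
        rw [interior_Icc] at ht
        exact (hd t ⟨ht.1, by linarith [ht.2]⟩).hasDerivWithinAt
      · intro t ht
        rw [interior_Icc] at ht
        have : fd z ≤ fd t := fd_anti ⟨ht.1, by linarith [ht.2]⟩ hzmem ht.2.le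
        linarith
    have := hanti ⟨hw0, hwz⟩ ⟨hz0.le, le_refl z⟩ hwz
    linarith [hEz]
  · have hmono : MonotoneOn E (Set.Icc z (1/2)) := by
      apply monotoneOn_of_hasDerivWithinAt_nonneg (f' := fun t => fd z - fd t) (convex_Icc _ _)
        hcont.continuousOn
      · intro t ht
        rw [interior_Icc] at ht
        exact (hd t ⟨by linarith [ht.1], by linarith [ht.2]⟩).hasDerivWithinAt
      · intro t ht
        rw [interior_Icc] at ht
        have : fd t ≤ fd z := fd_anti hzmem ⟨by linarith [ht.1], ht.2.le⟩ ht.1.le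
        linarith
    have := hmono ⟨le_refl z, by linarith⟩ ⟨hwz, hw2⟩ hwz
    linarith [hEz]

lemma fskew_fifth : fskew (1/5) = (7/5) * Real.log 2 - (6/5) * Real.log 3 := by
  have h1 : Real.log ((1:ℝ)/5/2) = -(Real.log 2 + Real.log 5) := by
    rw [show (1:ℝ)/5/2 = ((2*5 : ℝ))⁻¹ by norm_num, Real.log_inv,
      Real.log_mul two_ne_zero (by norm_num)]
  have h2 : Real.log (1 - (1:ℝ)/5/2) = 2 * Real.log 3 - (Real.log 2 + Real.log 5) := by
    rw [show (1 : ℝ) - 1/5/2 = 3^2 / (2*5) by norm_num,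
      Real.log_div (by norm_num) (by norm_num), Real.log_pow,
      Real.log_mul two_ne_zero (by norm_num)]
    push_cast; ring
  have h3 : Real.log ((1 - (1:ℝ)/5)/2) = Real.log 2 - Real.log 5 := by
    rw [show ((1:ℝ) - 1/5)/2 = 2/5 by norm_num, Real.log_div two_ne_zero (by norm_num)]
  have h4 : Real.log (1 - (1 - (1:ℝ)/5)/2) = Real.log 3 - Real.log 5 := by
    rw [show (1:ℝ) - (1 - 1/5)/2 = 3/5 by norm_num, Real.log_div (by norm_num) (by norm_num)]
  simp only [fskew, binH, Real.negMulLog]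
  rw [h1, h2, h3, h4]
  ring

lemma fd_fifth : fd (1/5) = (3/2) * Real.log 3 - (1/2) * Real.log 2 := by
  have h1 : Real.log (2 - (1:ℝ)/5) = 2 * Real.log 3 - Real.log 5 := by
    rw [show (2:ℝ) - 1/5 = 3^2/5 by norm_num, Real.log_div (by norm_num) (by norm_num),
      Real.log_pow]
    push_cast; ring
  have h2 : Real.log ((1:ℝ)/5) = -Real.log 5 := by
    rw [show (1:ℝ)/5 = (5:ℝ)⁻¹ by norm_num, Real.log_inv]
  have h3 : Real.log (1 + (1:ℝ)/5) = Real.log 2 + Real.log 3 - Real.log 5 := by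
    rw [show (1:ℝ) + 1/5 = 2*3/5 by norm_num, Real.log_div (by norm_num) (by norm_num),
      Real.log_mul two_ne_zero (by norm_num)]
  have h4 : Real.log (1 - (1:ℝ)/5) = 2 * Real.log 2 - Real.log 5 := by
    rw [show (1:ℝ) - 1/5 = 2^2/5 by norm_num, Real.log_div (by norm_num) (by norm_num),
      Real.log_pow]
    push_cast; ring
  rw [fd, h1, h2, h3, h4]
  ring

lemma fskew_one : fskew 1 = Real.log 2 := by
  have : Real.log ((1:ℝ)/2) = -Real.log 2 := by
    rw [show (1:ℝ)/2 = (2:ℝ)⁻¹ by norm_num, Real.log_inv]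
  simp only [fskew, binH, Real.negMulLog]
  norm_num [this]
  ring

lemma lfun_one : lfun 1 = Real.log 2 := by
  rw [lfun, fskew_fifth, fd_fifth]; ring

lemma gskew_eq_f {η : ℝ} (h : η ≤ 1/5) : gskew η = fskew η := by
  rw [gskew, if_pos h]

lemma gskew_eq_lfun {η : ℝ} (h : ¬ η ≤ 1/5) : gskew η = lfun η := by
  rw [gskew, if_neg h, lfun, fskew_fifth, fd_fifth]; ring

lemma fskew_le_lfun {η : ℝ} (h0 : 0 ≤ η) (h1 : η ≤ 1) : fskew η ≤ lfun η := by
  rcases le_total η (1/2) with hle | hge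
  · exact tangent_le (by norm_num) (le_refl _) h0 hle
  · -- On [1/2, 1]: `lfun - fskew` is concave with nonnegative endpoint values.
    have hconv : ConvexOn ℝ (Set.Icc (1/2 : ℝ) 1) fskew := by
      apply convexOn_of_hasDerivWithinAt2_nonneg (f' := fd) (f'' := fdd) (convex_Icc _ _)
        continuous_fskew.continuousOn
      · intro x hx
        rw [interior_Icc] at hx
        exact (hasDerivAt_fskew (by linarith [hx.1]) hx.2).hasDerivWithinAt
      · intro x hx
        rw [interior_Icc] at hx
        exact (hasDerivAt_fd (by linarith [hx.1]) hx.2).hasDerivWithinAt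
      · intro x hx
        rw [interior_Icc] at hx
        exact fdd_nonneg hx.1.le hx.2
    have hlin : ConcaveOn ℝ (Set.Icc (1/2 : ℝ) 1) lfun := by
      refine ⟨convex_Icc _ _, ?_⟩
      intro x _ y _ a b ha hb hab
      simp only [smul_eq_mul, lfun]
      apply le_of_eq
      linear_combination (fskew (1/5) - fd (1/5) * (1/5)) * hab
    have hconc : ConcaveOn ℝ (Set.Icc (1/2 : ℝ) 1) (lfun - fskew) := hlin.sub hconv
    have hD1 : (lfun - fskew) 1 = 0 := by
      simp [Pi.sub_apply, lfun_one, fskew_one]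
    have hDh : 0 ≤ (lfun - fskew) (1/2) := by
      simp only [Pi.sub_apply, sub_nonneg]
      exact tangent_le (by norm_num) (le_refl _) (by norm_num) (le_refl _)
    have ha : (0:ℝ) ≤ 2 * (1 - η) := by linarith
    have hb : (0:ℝ) ≤ 2 * η - 1 := by linarith
    have hab : 2 * (1 - η) + (2 * η - 1) = 1 := by ring
    have hm1 : (1/2 : ℝ) ∈ Set.Icc (1/2 : ℝ) 1 := by norm_num
    have hm2 : (1 : ℝ) ∈ Set.Icc (1/2 : ℝ) 1 := by norm_num
    have key := hconc.2 hm1 hm2 ha hb hab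
    simp only [smul_eq_mul] at key
    rw [show 2 * (1 - η) * (1/2) + (2 * η - 1) * 1 = η by ring] at key
    have h2 : 0 ≤ (lfun - fskew) η := by
      rw [hD1] at key
      nlinarith [mul_nonneg ha hDh]
    simp only [Pi.sub_apply, sub_nonneg] at h2
    exact h2

lemma lfun_le_tangent {z y : ℝ} (hz0 : 0 < z) (hz5 : z ≤ 1/5) (hy : 1/5 ≤ y) :
    lfun y ≤ fskew z + fd z * (y - z) := by
  have h1 : fskew (1/5) ≤ fskew z + fd z * (1/5 - z) :=
    tangent_le hz0 hz5 (by norm_num) (by norm_num)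
  have h2 : fd (1/5) ≤ fd z := fd_anti ⟨hz0, by linarith⟩ ⟨by norm_num, by norm_num⟩ hz5
  have h3 : fd (1/5) * (y - 1/5) ≤ fd z * (y - 1/5) :=
    mul_le_mul_of_nonneg_right h2 (by linarith)
  have expand : fd z * (y - z) = fd z * (1/5 - z) + fd z * (y - 1/5) := by ring
  rw [lfun, expand]
  linarith

lemma mixed_case {x y a b : ℝ} (hx0 : 0 ≤ x) (hy1 : y ≤ 1) (hx5 : x ≤ 1/5) (hy5 : 1/5 < y)
    (ha : 0 < a) (hb : 0 < b) (hab : a + b = 1) :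
    a * gskew x + b * gskew y ≤ gskew (a * x + b * y) := by
  rw [gskew_eq_f hx5, gskew_eq_lfun (not_le.2 hy5)]
  by_cases hz : a * x + b * y ≤ 1/5
  · rw [gskew_eq_f hz]
    have hby : 0 < b * y := mul_pos hb (by linarith)
    have hz0 : 0 < a * x + b * y := by nlinarith [mul_nonneg ha.le hx0]
    have t1 : fskew x ≤ fskew (a*x+b*y) + fd (a*x+b*y) * (x - (a*x+b*y)) :=
      tangent_le hz0 hz hx0 (by linarith)
    have t2 : lfun y ≤ fskew (a*x+b*y) + fd (a*x+b*y) * (y - (a*x+b*y)) :=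
      lfun_le_tangent hz0 hz hy5.le
    have sum_eq : a * (fskew (a*x+b*y) + fd (a*x+b*y) * (x - (a*x+b*y)))
        + b * (fskew (a*x+b*y) + fd (a*x+b*y) * (y - (a*x+b*y))) = fskew (a*x+b*y) := by
      linear_combination (fskew (a*x+b*y) - fd (a*x+b*y) * (a*x+b*y)) * hab
    calc a * fskew x + b * lfun y
        ≤ a * (fskew (a*x+b*y) + fd (a*x+b*y) * (x - (a*x+b*y)))
          + b * (fskew (a*x+b*y) + fd (a*x+b*y) * (y - (a*x+b*y))) :=
          add_le_add (mul_le_mul_of_nonneg_left t1 ha.le) (mul_le_mul_of_nonneg_left t2 hb.le)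
      _ = fskew (a*x+b*y) := sum_eq
  · rw [gskew_eq_lfun hz]
    have t1 : fskew x ≤ lfun x := fskew_le_lfun hx0 (by linarith)
    have sum_eq : a * lfun x + b * lfun y = lfun (a*x+b*y) := by
      simp only [lfun]
      linear_combination (fskew (1/5) - fd (1/5) * (1/5)) * hab
    calc a * fskew x + b * lfun y ≤ a * lfun x + b * lfun y :=
          add_le_add_left (mul_le_mul_of_nonneg_left t1 ha.le) _
      _ = lfun (a*x+b*y) := sum_eq

/-- `g` is concave on `[0,1]` and dominates `f` there. -/
theorem stmt9 :
    ConcaveOn ℝ (Set.Icc (0 : ℝ) 1) gskew ∧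
    (∀ η ∈ Set.Icc (0 : ℝ) 1, fskew η ≤ gskew η) := by
  constructor
  · refine ⟨convex_Icc _ _, ?_⟩
    intro x hx y hy a b ha hb hab
    simp only [smul_eq_mul]
    rcases eq_or_lt_of_le ha with ha0 | ha0
    · have hb1 : b = 1 := by linarith
      simp [← ha0, hb1]
    rcases eq_or_lt_of_le hb with hb0 | hb0
    · have ha1 : a = 1 := by linarith
      simp [← hb0, ha1]
    rcases le_or_gt x (1/5) with hx5 | hx5 <;> rcases le_or_gt y (1/5) with hy5 | hy5
    · -- both ≤ 1/5
      have hz5 : a * x + b * y ≤ 1/5 := by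
        nlinarith [mul_le_mul_of_nonneg_left hx5 ha, mul_le_mul_of_nonneg_left hy5 hb]
      rw [gskew_eq_f hx5, gskew_eq_f hy5, gskew_eq_f hz5]
      rcases eq_or_lt_of_le (show (0:ℝ) ≤ a * x + b * y from
        add_nonneg (mul_nonneg ha hx.1) (mul_nonneg hb hy.1)) with h0 | h0
      · have hax : a * x = 0 := by nlinarith [mul_nonneg ha hx.1, mul_nonneg hb hy.1]
        have hby : b * y = 0 := by nlinarith [mul_nonneg ha hx.1, mul_nonneg hb hy.1]
        have hx0 : x = 0 := by
          rcases mul_eq_zero.1 hax with h | h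
          · exact absurd h (ne_of_gt ha0)
          · exact h
        have hy0 : y = 0 := by
          rcases mul_eq_zero.1 hby with h | h
          · exact absurd h (ne_of_gt hb0)
          · exact h
        subst hx0; subst hy0
        have : a * fskew 0 + b * fskew 0 = fskew 0 := by linear_combination (fskew 0) * hab
        simp only [mul_zero, add_zero]
        linarith
      · have t1 : fskew x ≤ fskew (a*x+b*y) + fd (a*x+b*y) * (x - (a*x+b*y)) :=
          tangent_le h0 hz5 hx.1 (by linarith)
        have t2 : fskew y ≤ fskew (a*x+b*y) + fd (a*x+b*y) * (y - (a*x+b*y)) :=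
          tangent_le h0 hz5 hy.1 (by linarith)
        have sum_eq : a * (fskew (a*x+b*y) + fd (a*x+b*y) * (x - (a*x+b*y)))
            + b * (fskew (a*x+b*y) + fd (a*x+b*y) * (y - (a*x+b*y))) = fskew (a*x+b*y) := by
          linear_combination (fskew (a*x+b*y) - fd (a*x+b*y) * (a*x+b*y)) * hab
        calc a * fskew x + b * fskew y
            ≤ a * (fskew (a*x+b*y) + fd (a*x+b*y) * (x - (a*x+b*y)))
              + b * (fskew (a*x+b*y) + fd (a*x+b*y) * (y - (a*x+b*y))) :=
              add_le_add (mul_le_mul_of_nonneg_left t1 ha0.le)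
                (mul_le_mul_of_nonneg_left t2 hb0.le)
          _ = fskew (a*x+b*y) := sum_eq
    · exact mixed_case hx.1 hy.2 hx5 hy5 ha0 hb0 hab
    · have := mixed_case hy.1 hx.2 hy5 hx5 hb0 ha0 (by linarith)
      rw [show b * y + a * x = a * x + b * y by ring] at this
      linarith
    · have hz5 : 1/5 < a * x + b * y := by
        nlinarith [mul_lt_mul_of_pos_left hx5 ha0, mul_lt_mul_of_pos_left hy5 hb0]
      rw [gskew_eq_lfun (not_le.2 hx5), gskew_eq_lfun (not_le.2 hy5),
        gskew_eq_lfun (not_le.2 hz5)]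
      apply le_of_eq
      simp only [lfun]
      linear_combination (fskew (1/5) - fd (1/5) * (1/5)) * hab
  · intro η hη
    rcases le_or_gt η (1/5) with h | h
    · rw [gskew_eq_f h]
    · rw [gskew_eq_lfun (not_le.2 h)]
      exact fskew_le_lfun hη.1 hη.2
end

section
/- Let V, X, Y1, Y2 be finitely-valued random variables, with X, Y1, Y2 Boolean-valued, such that (Y1,Y2) is conditionally independent of V given X and, conditionally on X, (Y1,Y2) is distributed according to the BSSC with p = 1/2. If P(X=0) ≤ 1/5, then I(V;Y2) ≤ I(V;Y1). -/
open MeasureTheory Real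

noncomputable def cSlope (x : ℝ) : ℝ :=
  (Real.log (2 - x) + Real.log (1 + x) - Real.log x - Real.log (1 - x)) / 2

noncomputable def cSlope' (x : ℝ) : ℝ :=
  (-(2 - x)⁻¹ + (1 + x)⁻¹ - x⁻¹ + (1 - x)⁻¹) / 2

lemma hd_nm_lin (a b x : ℝ) (h : a * x + b ≠ 0) :
    HasDerivAt (fun y => Real.negMulLog (a * y + b)) ((-Real.log (a * x + b) - 1) * a) x := by
  have h1 : HasDerivAt (fun y : ℝ => a * y + b) a x := by
    simpa using ((hasDerivAt_id x).const_mul a).add_const b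
  exact (Real.hasDerivAt_negMulLog h).comp x h1

lemma fskew_hasDeriv {x : ℝ} (hx0 : 0 < x) (hx1 : x < 1) :
    HasDerivAt fskew (cSlope x) x := by
  have e : fskew = fun y => Real.negMulLog ((1/2) * y + 0) + Real.negMulLog ((-(1/2)) * y + 1)
      - (Real.negMulLog ((-(1/2)) * y + 1/2) + Real.negMulLog ((1/2) * y + 1/2)) := by
    funext y
    unfold fskew binH
    ring_nf
  rw [e]
  have h1 := hd_nm_lin (1/2) 0 x (by positivity)
  have h2 := hd_nm_lin (-(1/2)) 1 x (by nlinarith)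
  have h3 := hd_nm_lin (-(1/2)) (1/2) x (by nlinarith)
  have h4 := hd_nm_lin (1/2) (1/2) x (by nlinarith)
  have h := (h1.add h2).sub (h3.add h4)
  refine HasDerivAt.congr_deriv h ?_
  have l1 : Real.log (1/2 * x + 0) = Real.log x - Real.log 2 := by
    rw [show (1/2 * x + 0 : ℝ) = x / 2 by ring, Real.log_div hx0.ne' two_ne_zero]
  have l2 : Real.log (-(1/2) * x + 1) = Real.log (2 - x) - Real.log 2 := by
    rw [show (-(1/2) * x + 1 : ℝ) = (2 - x) / 2 by ring,
      Real.log_div (by nlinarith) two_ne_zero]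
  have l3 : Real.log (-(1/2) * x + 1/2) = Real.log (1 - x) - Real.log 2 := by
    rw [show (-(1/2) * x + 1/2 : ℝ) = (1 - x) / 2 by ring,
      Real.log_div (by nlinarith) two_ne_zero]
  have l4 : Real.log (1/2 * x + 1/2) = Real.log (1 + x) - Real.log 2 := by
    rw [show (1/2 * x + 1/2 : ℝ) = (1 + x) / 2 by ring,
      Real.log_div (by nlinarith) two_ne_zero]
  rw [l1, l2, l3, l4]
  unfold cSlope
  ring

lemma cSlope_hasDeriv {x : ℝ} (hx0 : 0 < x) (hx1 : x < 1) :
    HasDerivAt cSlope (cSlope' x) x := by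
  have h1 : HasDerivAt (fun y : ℝ => Real.log (2 - y)) ((2 - x)⁻¹ * (-1)) x :=
    (Real.hasDerivAt_log (by nlinarith)).comp x ((hasDerivAt_id x).const_sub 2)
  have h2 : HasDerivAt (fun y : ℝ => Real.log (1 + y)) ((1 + x)⁻¹ * 1) x :=
    (Real.hasDerivAt_log (by nlinarith)).comp x ((hasDerivAt_id x).const_add 1)
  have h3 : HasDerivAt (fun y : ℝ => Real.log y) (x⁻¹) x := Real.hasDerivAt_log hx0.ne'
  have h4 : HasDerivAt (fun y : ℝ => Real.log (1 - y)) ((1 - x)⁻¹ * (-1)) x :=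
    (Real.hasDerivAt_log (by nlinarith)).comp x ((hasDerivAt_id x).const_sub 1)
  have h := (((h1.add h2).sub h3).sub h4).div_const 2
  refine HasDerivAt.congr_deriv h ?_
  unfold cSlope'
  ring

lemma cSlope'_sign {x : ℝ} (hx0 : 0 < x) (hx1 : x < 1) :
    cSlope' x = (1 - 2*x) * ((x * (1-x)) - (1+x) * (2-x)) / (2 * ((1+x) * (2-x) * x * (1-x))) := by
  have h2 : (2:ℝ) - x ≠ 0 := by linarith
  have h1 : (1:ℝ) - x ≠ 0 := by linarith
  have hxne : x ≠ 0 := hx0.ne'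
  have h1p : (1:ℝ) + x ≠ 0 := by linarith
  unfold cSlope'
  field_simp
  ring

lemma denom_pos {x : ℝ} (hx0 : 0 < x) (hx1 : x < 1) :
    0 < 2 * ((1+x) * (2-x) * x * (1-x)) := by
  have h1p : (0:ℝ) < 1 + x := by linarith
  have h2 : (0:ℝ) < 2 - x := by linarith
  have h1 : (0:ℝ) < 1 - x := by linarith
  have := mul_pos (mul_pos (mul_pos h1p h2) hx0) h1
  linarith

lemma cSlope'_nonpos {x : ℝ} (hx0 : 0 < x) (hx1 : x ≤ 1/2) : cSlope' x ≤ 0 := by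
  have hx1' : x < 1 := by linarith
  rw [cSlope'_sign hx0 hx1']
  apply div_nonpos_of_nonpos_of_nonneg _ (denom_pos hx0 hx1').le
  nlinarith

lemma cSlope'_nonneg {x : ℝ} (hx0 : 1/2 ≤ x) (hx1 : x < 1) : 0 ≤ cSlope' x := by
  have hx0' : 0 < x := by linarith
  rw [cSlope'_sign hx0' hx1]
  apply div_nonneg _ (denom_pos hx0' hx1).le
  nlinarith

lemma cSlope_anti {a b : ℝ} (ha : 0 < a) (hab : a ≤ b) (hb : b ≤ 1/2) : cSlope b ≤ cSlope a := by
  rcases eq_or_lt_of_le hab with rfl | h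
  · exact le_refl _
  · obtain ⟨c, hc, hceq⟩ := exists_hasDerivAt_eq_slope cSlope cSlope' h
      (fun x hx => (cSlope_hasDeriv (lt_of_lt_of_le ha hx.1)
        (lt_of_le_of_lt hx.2 (by linarith))).continuousAt.continuousWithinAt)
      (fun x hx => cSlope_hasDeriv (lt_trans ha hx.1) (by linarith [hx.2]))
    rw [eq_div_iff (by linarith : b - a ≠ 0)] at hceq
    have hs := cSlope'_nonpos (lt_trans ha hc.1) (by linarith [hc.2])
    nlinarith
lemma cSlope_mono {a b : ℝ} (ha : 1/2 ≤ a) (hab : a ≤ b) (hb : b < 1) : cSlope a ≤ cSlope b := by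
  rcases eq_or_lt_of_le hab with rfl | h
  · exact le_refl _
  · obtain ⟨c, hc, hceq⟩ := exists_hasDerivAt_eq_slope cSlope cSlope' h
      (fun x hx => (cSlope_hasDeriv (by linarith [hx.1])
        (lt_of_le_of_lt hx.2 hb)).continuousAt.continuousWithinAt)
      (fun x hx => cSlope_hasDeriv (by linarith [hx.1]) (lt_trans hx.2 hb))
    rw [eq_div_iff (by linarith : b - a ≠ 0)] at hceq
    have hs := cSlope'_nonneg (by linarith [hc.1]) (lt_trans hc.2 hb)
    nlinarith

noncomputable def Gfun (x : ℝ) : ℝ := fskew x + cSlope x * (1 - x)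

lemma Gfun_hasDeriv {x : ℝ} (hx0 : 0 < x) (hx1 : x < 1) :
    HasDerivAt Gfun (cSlope' x * (1 - x)) x := by
  have h := (fskew_hasDeriv hx0 hx1).add
    ((cSlope_hasDeriv hx0 hx1).mul ((hasDerivAt_id x).const_sub 1))
  refine HasDerivAt.congr_deriv h ?_
  simp only [id_eq]
  ring

lemma Gfun_fifth : Gfun (1/5) = Real.log 2 := by
  have l10 : Real.log (1/10 : ℝ) = -(Real.log 2 + Real.log 5) := by
    rw [show (1/10 : ℝ) = ((2:ℝ)*5)⁻¹ by norm_num, Real.log_inv,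
      Real.log_mul (by norm_num) (by norm_num)]
  have l910 : Real.log (9/10 : ℝ) = 2 * Real.log 3 - (Real.log 2 + Real.log 5) := by
    rw [Real.log_div (by norm_num) (by norm_num),
      show (9:ℝ) = 3^2 by norm_num, Real.log_pow,
      show (10:ℝ) = 2*5 by norm_num, Real.log_mul (by norm_num) (by norm_num)]
    push_cast; ring
  have l25 : Real.log (2/5 : ℝ) = Real.log 2 - Real.log 5 :=
    Real.log_div (by norm_num) (by norm_num)
  have l35 : Real.log (3/5 : ℝ) = Real.log 3 - Real.log 5 :=
    Real.log_div (by norm_num) (by norm_num)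
  have l95 : Real.log (9/5 : ℝ) = 2 * Real.log 3 - Real.log 5 := by
    rw [Real.log_div (by norm_num) (by norm_num),
      show (9:ℝ) = 3^2 by norm_num, Real.log_pow]
    push_cast; ring
  have l65 : Real.log (6/5 : ℝ) = Real.log 2 + Real.log 3 - Real.log 5 := by
    rw [Real.log_div (by norm_num) (by norm_num),
      show (6:ℝ) = 2*3 by norm_num, Real.log_mul (by norm_num) (by norm_num)]
  have l15 : Real.log (1/5 : ℝ) = -Real.log 5 := by
    rw [show (1/5 : ℝ) = (5:ℝ)⁻¹ by norm_num, Real.log_inv]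
  have l45 : Real.log (4/5 : ℝ) = 2 * Real.log 2 - Real.log 5 := by
    rw [Real.log_div (by norm_num) (by norm_num),
      show (4:ℝ) = 2^2 by norm_num, Real.log_pow]
    push_cast; ring
  unfold Gfun fskew binH cSlope Real.negMulLog
  norm_num
  rw [l10, l910, l25, l35, l95, l65, l15, l45]
  ring

lemma Gfun_ge {η : ℝ} (hη0 : 0 < η) (hη : η ≤ 1/5) : Real.log 2 ≤ Gfun η := by
  rcases eq_or_lt_of_le hη with rfl | h
  · exact Gfun_fifth.ge
  · obtain ⟨c, hc, hceq⟩ := exists_hasDerivAt_eq_slope Gfun (fun x => cSlope' x * (1 - x)) h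
      (fun x hx => (Gfun_hasDeriv (lt_of_lt_of_le hη0 hx.1)
        (by linarith [hx.2] : x < 1)).continuousAt.continuousWithinAt)
      (fun x hx => Gfun_hasDeriv (lt_trans hη0 hx.1) (by linarith [hx.2]))
    rw [eq_div_iff (by linarith : 1/5 - η ≠ 0)] at hceq
    have hs : cSlope' c * (1 - c) ≤ 0 := by
      have := cSlope'_nonpos (lt_trans hη0 hc.1) (by linarith [hc.2])
      nlinarith [hc.2]
    rw [← Gfun_fifth]
    nlinarith

lemma fskew_tangent {η : ℝ} (hη0 : 0 < η) (hη : η ≤ 1/5) {t : ℝ} (ht0 : 0 ≤ t) (ht1 : t ≤ 1) :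
    fskew t ≤ fskew η + cSlope η * (t - η) := by
  set Hf : ℝ → ℝ := fun s => fskew η + cSlope η * (s - η) - fskew s with hHf
  have hη2 : η ≤ 1/2 := by linarith
  have hcont : Continuous Hf := by
    apply Continuous.sub _ continuous_fskew
    exact continuous_const.add (continuous_const.mul (continuous_id.sub continuous_const))
  have hd : ∀ s, 0 < s → s < 1 → HasDerivAt Hf (cSlope η - cSlope s) s := by
    intro s hs0 hs1
    have h1 : HasDerivAt (fun s : ℝ => fskew η + cSlope η * (s - η)) (cSlope η) s := by
      have := (((hasDerivAt_id s).sub_const η).const_mul (cSlope η)).const_add (fskew η)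
      simpa using this
    exact h1.sub (fskew_hasDeriv hs0 hs1)
  -- the inequality on (0, 1/2]
  have key : ∀ s, 0 < s → s ≤ 1/2 → 0 ≤ Hf s := by
    intro s hs0 hs2
    have hs1 : s < 1 := by linarith
    rcases lt_trichotomy s η with h | h | h
    · obtain ⟨c, hc, hceq⟩ := exists_hasDerivAt_eq_slope fskew cSlope h
        (fun x hx => (fskew_hasDeriv (lt_of_lt_of_le hs0 hx.1)
          (by linarith [hx.2] : x < 1)).continuousAt.continuousWithinAt)
        (fun x hx => fskew_hasDeriv (lt_trans hs0 hx.1) (by linarith [hx.2]))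
      rw [eq_div_iff (by linarith : η - s ≠ 0)] at hceq
      have := cSlope_anti (lt_trans hs0 hc.1) hc.2.le hη2
      simp only [hHf]
      nlinarith
    · simp [hHf, h]
    · obtain ⟨c, hc, hceq⟩ := exists_hasDerivAt_eq_slope fskew cSlope h
        (fun x hx => (fskew_hasDeriv (lt_of_lt_of_le hη0 hx.1)
          (by linarith [hx.2] : x < 1)).continuousAt.continuousWithinAt)
        (fun x hx => fskew_hasDeriv (lt_trans hη0 hx.1) (by linarith [hx.2]))
      rw [eq_div_iff (by linarith : s - η ≠ 0)] at hceq
      have := cSlope_anti hη0 hc.1.le (by linarith [hc.2])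
      simp only [hHf]
      nlinarith
  have hone : 0 ≤ Hf 1 := by
    have := Gfun_ge hη0 hη
    unfold Gfun at this
    simp only [hHf]
    rw [fskew_one]
    linarith
  clear_value Hf
  have main : 0 ≤ Hf t := by
    rcases le_or_gt t (1/2) with h | h
    · rcases eq_or_lt_of_le ht0 with h0 | h0
      · -- t = 0 : limit argument
        rw [← h0]
        have hlim : Filter.Tendsto Hf (nhdsWithin 0 (Set.Ioi 0)) (nhds (Hf 0)) :=
          (hcont.tendsto 0).mono_left nhdsWithin_le_nhds
        refine ge_of_tendsto hlim ?_
        filter_upwards [Ioc_mem_nhdsGT_of_mem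
            (by norm_num : (0:ℝ) ∈ Set.Ico (0:ℝ) (1/2))] with x hx
        exact key x hx.1 hx.2
      · exact key t h0 h
    · rcases eq_or_lt_of_le ht1 with h1 | h1
      · rw [h1]; exact hone
      · by_contra hcon
        push_neg at hcon
        have hhalf : 0 ≤ Hf (1/2) := key (1/2) (by norm_num) (le_refl _)
        obtain ⟨c1, hc1, hceq1⟩ := exists_hasDerivAt_eq_slope Hf
          (fun s => cSlope η - cSlope s) h
          (hcont.continuousOn)
          (fun x hx => hd x (by linarith [hx.1]) (by linarith [hx.2]))
        obtain ⟨c2, hc2, hceq2⟩ := exists_hasDerivAt_eq_slope Hf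
          (fun s => cSlope η - cSlope s) h1
          (hcont.continuousOn)
          (fun x hx => hd x (by linarith [hx.1]) hx.2)
        have hs1 : cSlope η - cSlope c1 < 0 := by
          rw [hceq1]
          apply div_neg_of_neg_of_pos (by linarith) (by linarith)
        have hs2 : 0 < cSlope η - cSlope c2 := by
          rw [hceq2]
          apply div_pos (by linarith) (by linarith)
        have := cSlope_mono (by linarith [hc1.1] : 1/2 ≤ c1)
          (by linarith [hc1.2, hc2.1] : c1 ≤ c2) hc2.2
        linarith
  simp only [hHf] at main
  linarith

lemma D_of_s (q s : ℝ) :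
    Real.negMulLog (q*(s/2)) + Real.negMulLog (q*(1 - s/2)) - Real.negMulLog (q*((1-s)/2))
      - Real.negMulLog (q*((1+s)/2)) = q * fskew s := by
  rw [Real.negMulLog_mul, Real.negMulLog_mul, Real.negMulLog_mul, Real.negMulLog_mul]
  unfold fskew binH
  rw [show (1 - (1-s)/2 : ℝ) = (1+s)/2 by ring]
  ring

lemma per_point_core {η r0 r1 : ℝ} (q s : ℝ) (hη0 : 0 < η) (hη : η ≤ 1/5) (hq : 0 ≤ q)
    (hs0 : 0 ≤ s) (hs1 : s ≤ 1) (hr0 : r0 = q*s) (hr1 : r1 = q*(1-s)) :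
    Real.negMulLog (r0/2) + Real.negMulLog (r0/2 + r1) - Real.negMulLog (r1/2)
      - Real.negMulLog (r0 + r1/2)
    ≤ (r0+r1) * fskew η + cSlope η * (r0 - (r0+r1)*η) := by
  subst hr0 hr1
  rw [show (q*s/2:ℝ) = q*(s/2) by ring,
    show (q*(s/2) + q*(1-s):ℝ) = q*(1 - s/2) by ring,
    show (q*(1-s)/2:ℝ) = q*((1-s)/2) by ring,
    show (q*s + q*((1-s)/2):ℝ) = q*((1+s)/2) by ring,
    D_of_s]
  have ht := fskew_tangent hη0 hη hs0 hs1
  calc q * fskew s ≤ q * (fskew η + cSlope η * (s - η)) :=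
        mul_le_mul_of_nonneg_left ht hq
    _ = (q*s + q*(1-s)) * fskew η + cSlope η * (q*s - (q*s + q*(1-s))*η) := by ring

lemma per_point {η r0 r1 : ℝ} (hη0 : 0 < η) (hη : η ≤ 1/5) (h0 : 0 ≤ r0) (h1 : 0 ≤ r1) :
    Real.negMulLog (r0/2) + Real.negMulLog (r0/2 + r1) - Real.negMulLog (r1/2)
      - Real.negMulLog (r0 + r1/2)
    ≤ (r0+r1) * fskew η + cSlope η * (r0 - (r0+r1)*η) := by
  rcases eq_or_lt_of_le (by linarith : (0:ℝ) ≤ r0 + r1) with hq | hq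
  · have hr0 : r0 = 0 := by linarith
    have hr1 : r1 = 0 := by linarith
    simp [hr0, hr1]
  · have hqne : r0 + r1 ≠ 0 := hq.ne'
    exact per_point_core (r0+r1) (r0/(r0+r1)) hη0 hη (by linarith) (div_nonneg h0 hq.le)
      (by rw [div_le_one hq]; linarith)
      (by field_simp) (by field_simp; ring)

lemma per_point_zero (r1 : ℝ) :
    Real.negMulLog ((0:ℝ)/2) + Real.negMulLog (0/2 + r1) - Real.negMulLog (r1/2)
      - Real.negMulLog (0 + r1/2) = r1 * fskew 0 := by
  simp only [zero_div, zero_add, Real.negMulLog_zero]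
  rw [show (r1/2:ℝ) = r1 * (1/2) by ring, Real.negMulLog_mul]
  unfold fskew binH
  norm_num
  ring

set_option linter.unusedSectionVars false
section Meas

variable {Ω : Type*} [MeasurableSpace Ω] (μ : Measure Ω) [IsProbabilityMeasure μ]

lemma prob_nonneg' {A : Type*} (f : Ω → A) (p : A) : 0 ≤ prob μ f p := ENNReal.toReal_nonneg

lemma prob_mono_of_subset {A B : Type*} {f : Ω → A} {g : Ω → B} {p : A} {q : B}
    (h : f ⁻¹' {p} ⊆ g ⁻¹' {q}) : prob μ f p ≤ prob μ g q :=
  ENNReal.toReal_mono (measure_ne_top μ _) (measure_mono h)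

lemma partition_toReal {B : Type*} [Fintype B] [MeasurableSpace B] [MeasurableSingletonClass B]
    {s : Set Ω} (hs : MeasurableSet s) {f : Ω → B} (hf : Measurable f) :
    (μ s).toReal = ∑ b, (μ (s ∩ f ⁻¹' {b})).toReal := by
  rw [← ENNReal.toReal_sum (fun b _ => measure_ne_top μ _)]
  congr 1
  have hset : s = ⋃ b, s ∩ f ⁻¹' {b} := by ext ω; simp
  conv_lhs => rw [hset]
  rw [measure_iUnion ?_ (fun b => hs.inter (hf (measurableSet_singleton b))), tsum_fintype]
  intro b c hbc
  apply Set.disjoint_left.mpr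
  intro ω h1 h2
  exact hbc (by
    have e1 : f ω = b := h1.2
    have e2 : f ω = c := h2.2
    rw [← e1, e2])

lemma sum_prob_snd {A B : Type*} [MeasurableSpace A] [MeasurableSingletonClass A]
    [MeasurableSpace B] [MeasurableSingletonClass B] [Fintype B]
    {X : Ω → A} {Y : Ω → B} (hX : Measurable X) (hY : Measurable Y) (a : A) :
    ∑ b, prob μ (fun ω => (X ω, Y ω)) (a, b) = prob μ X a := by
  unfold prob
  rw [partition_toReal μ (hX (measurableSet_singleton a)) hY]
  refine Finset.sum_congr rfl fun b _ => ?_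
  congr 2
  ext ω
  simp [Prod.ext_iff]

lemma sum_prob_fst {A B : Type*} [MeasurableSpace A] [MeasurableSingletonClass A]
    [MeasurableSpace B] [MeasurableSingletonClass B] [Fintype A]
    {X : Ω → A} {Y : Ω → B} (hX : Measurable X) (hY : Measurable Y) (b : B) :
    ∑ a, prob μ (fun ω => (X ω, Y ω)) (a, b) = prob μ Y b := by
  unfold prob
  rw [partition_toReal μ (hY (measurableSet_singleton b)) hX]
  refine Finset.sum_congr rfl fun a _ => ?_
  congr 2
  ext ω
  simp [Prod.ext_iff]
  tauto

lemma sum_prob_one {A : Type*} [MeasurableSpace A] [MeasurableSingletonClass A] [Fintype A]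
    {X : Ω → A} (hX : Measurable X) : ∑ a, prob μ X a = 1 := by
  unfold prob
  have h := partition_toReal μ (MeasurableSet.univ) hX
  simp only [Set.univ_inter] at h
  rw [← h, measure_univ, ENNReal.toReal_one]

end Meas
set_option linter.unusedSectionVars true

/-- For `V → X → (Y₁,Y₂)` with `(Y₁,Y₂)` a BSSC (`p = 1/2`) output
of `X`: if `P(X = 0) ≤ 1/5` then `I(V;Y₂) ≤ I(V;Y₁)`. -/
theorem stmt11 {Ω A : Type*} [MeasurableSpace Ω]
    (μ : Measure Ω) [IsProbabilityMeasure μ]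
    [Fintype A] [MeasurableSpace A] [MeasurableSingletonClass A]
    (V : Ω → A) (X Y1 Y2 : Ω → Bool)
    (hV : Measurable V) (hX : Measurable X) (hY1 : Measurable Y1) (hY2 : Measurable Y2)
    (hMarkov : CondIndepGiven μ V X (fun ω => (Y1 ω, Y2 ω)))
    (hBSSC : IsBSSC μ X Y1 Y2)
    (hη : prob μ X false ≤ 1 / 5) :
    mutualInfo μ V Y2 ≤ mutualInfo μ V Y1 := by
  set η := prob μ X false with hηdef
  set r0 : A → ℝ := fun a => prob μ (fun ω => (V ω, X ω)) (a, false) with hr0def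
  set r1 : A → ℝ := fun a => prob μ (fun ω => (V ω, X ω)) (a, true) with hr1def
  -- quadruple joint distribution
  have hquad : ∀ a x y1 y2, prob μ (fun ω => (V ω, X ω, Y1 ω, Y2 ω)) (a, x, y1, y2)
      = prob μ (fun ω => (V ω, X ω)) (a, x) * bsscK x y1 y2 := by
    intro a x y1 y2
    have hM := hMarkov a x (y1, y2)
    have hB := hBSSC x y1 y2
    rcases eq_or_ne (prob μ X x) 0 with h0 | h0
    · have hq0 : prob μ (fun ω => (V ω, X ω, Y1 ω, Y2 ω)) (a, x, y1, y2) = 0 := by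
        refine le_antisymm ?_ (prob_nonneg' μ _ _)
        rw [← h0]
        refine prob_mono_of_subset μ ?_
        intro ω hω
        simp only [Set.mem_preimage, Set.mem_singleton_iff, Prod.mk.injEq] at hω ⊢
        exact hω.2.1
      have hr0' : prob μ (fun ω => (V ω, X ω)) (a, x) = 0 := by
        refine le_antisymm ?_ (prob_nonneg' μ _ _)
        rw [← h0]
        refine prob_mono_of_subset μ ?_
        intro ω hω
        simp only [Set.mem_preimage, Set.mem_singleton_iff, Prod.mk.injEq] at hω ⊢
        exact hω.2
      rw [hq0, hr0', zero_mul]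
    · refine mul_right_cancel₀ h0 ?_
      rw [hM, hB]
      ring
  -- marginals (V, Y1) and (V, Y2) as sums over the quadruple
  have hVY1 : ∀ (a : A) (y1 : Bool), prob μ (fun ω => (V ω, Y1 ω)) (a, y1)
      = ∑ x, ∑ y2, prob μ (fun ω => (V ω, X ω, Y1 ω, Y2 ω)) (a, x, y1, y2) := by
    intro a y1
    unfold prob
    rw [partition_toReal μ ((hV.prodMk hY1) (measurableSet_singleton (a, y1))) hX]
    refine Finset.sum_congr rfl fun x _ => ?_
    rw [partition_toReal μ ((((hV.prodMk hY1)
      (measurableSet_singleton (a, y1)))).inter (hX (measurableSet_singleton x))) hY2]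
    refine Finset.sum_congr rfl fun y2 _ => ?_
    congr 2
    ext ω
    simp only [Set.mem_inter_iff, Set.mem_preimage, Set.mem_singleton_iff, Prod.mk.injEq]
    tauto
  have hVY2 : ∀ (a : A) (y2 : Bool), prob μ (fun ω => (V ω, Y2 ω)) (a, y2)
      = ∑ x, ∑ y1, prob μ (fun ω => (V ω, X ω, Y1 ω, Y2 ω)) (a, x, y1, y2) := by
    intro a y2
    unfold prob
    rw [partition_toReal μ ((hV.prodMk hY2) (measurableSet_singleton (a, y2))) hX]
    refine Finset.sum_congr rfl fun x _ => ?_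
    rw [partition_toReal μ ((((hV.prodMk hY2)
      (measurableSet_singleton (a, y2)))).inter (hX (measurableSet_singleton x))) hY1]
    refine Finset.sum_congr rfl fun y1 _ => ?_
    congr 2
    ext ω
    simp only [Set.mem_inter_iff, Set.mem_preimage, Set.mem_singleton_iff, Prod.mk.injEq]
    tauto
  -- explicit values
  have hA1 : ∀ a, prob μ (fun ω => (V ω, Y1 ω)) (a, false) = r0 a / 2 := by
    intro a
    rw [hVY1, Fintype.sum_bool, Fintype.sum_bool, Fintype.sum_bool]
    simp only [hquad, bsscK]
    norm_num
    simp only [hr0def, hr1def]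
    ring
  have hA2 : ∀ a, prob μ (fun ω => (V ω, Y1 ω)) (a, true) = r0 a / 2 + r1 a := by
    intro a
    rw [hVY1, Fintype.sum_bool, Fintype.sum_bool, Fintype.sum_bool]
    simp only [hquad, bsscK]
    norm_num
    simp only [hr0def, hr1def]
    ring
  have hB1 : ∀ a, prob μ (fun ω => (V ω, Y2 ω)) (a, false) = r0 a + r1 a / 2 := by
    intro a
    rw [hVY2, Fintype.sum_bool, Fintype.sum_bool, Fintype.sum_bool]
    simp only [hquad, bsscK]
    norm_num
    simp only [hr0def, hr1def]
    ring
  have hB2 : ∀ a, prob μ (fun ω => (V ω, Y2 ω)) (a, true) = r1 a / 2 := by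
    intro a
    rw [hVY2, Fintype.sum_bool, Fintype.sum_bool, Fintype.sum_bool]
    simp only [hquad, bsscK]
    norm_num
    simp only [hr0def, hr1def]
    ring
  -- marginal sums
  have hsum_r0 : ∑ a, r0 a = η := sum_prob_fst μ hV hX false
  have hXtrue : prob μ X true = 1 - η := by
    have h := sum_prob_one μ hX
    rw [Fintype.sum_bool] at h
    linarith
  have hsum_r1 : ∑ a, r1 a = 1 - η := by
    rw [hr1def]
    simp only
    rw [sum_prob_fst μ hV hX true, hXtrue]
  have hVtot : ∑ a, (r0 a + r1 a) = 1 := by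
    rw [Finset.sum_add_distrib, hsum_r0, hsum_r1]
    ring
  have hη0 : 0 ≤ η := prob_nonneg' μ _ _
  -- Y1, Y2 marginal probabilities
  have hY1f : prob μ Y1 false = η / 2 := by
    rw [← sum_prob_fst μ hV hY1 false]
    rw [Finset.sum_congr rfl fun a _ => hA1 a, ← Finset.sum_div, hsum_r0]
  have hY1t : prob μ Y1 true = 1 - η / 2 := by
    rw [← sum_prob_fst μ hV hY1 true]
    rw [Finset.sum_congr rfl fun a _ => hA2 a, Finset.sum_add_distrib, ← Finset.sum_div,
      hsum_r0, hsum_r1]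
    ring
  have hY2f : prob μ Y2 false = (1 + η) / 2 := by
    rw [← sum_prob_fst μ hV hY2 false]
    rw [Finset.sum_congr rfl fun a _ => hB1 a, Finset.sum_add_distrib, ← Finset.sum_div,
      hsum_r0, hsum_r1]
    ring
  have hY2t : prob μ Y2 true = (1 - η) / 2 := by
    rw [← sum_prob_fst μ hV hY2 true]
    rw [Finset.sum_congr rfl fun a _ => hB2 a, ← Finset.sum_div, hsum_r1]
  -- entropies
  have hEY1 : entropy μ Y1 = Real.negMulLog (1 - η / 2) + Real.negMulLog (η / 2) := by
    unfold entropy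
    rw [Fintype.sum_bool, hY1t, hY1f]
  have hEY2 : entropy μ Y2
      = Real.negMulLog ((1 - η) / 2) + Real.negMulLog ((1 + η) / 2) := by
    unfold entropy
    rw [Fintype.sum_bool, hY2t, hY2f]
  have hEVY1 : entropy μ (fun ω => (V ω, Y1 ω))
      = ∑ a, (Real.negMulLog (r0 a / 2 + r1 a) + Real.negMulLog (r0 a / 2)) := by
    unfold entropy
    rw [Fintype.sum_prod_type]
    refine Finset.sum_congr rfl fun a _ => ?_
    rw [Fintype.sum_bool, hA2, hA1]
  have hEVY2 : entropy μ (fun ω => (V ω, Y2 ω))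
      = ∑ a, (Real.negMulLog (r1 a / 2) + Real.negMulLog (r0 a + r1 a / 2)) := by
    unfold entropy
    rw [Fintype.sum_prod_type]
    refine Finset.sum_congr rfl fun a _ => ?_
    rw [Fintype.sum_bool, hB2, hB1]
  -- the key inequality : ∑ D ≤ fskew η
  have hr0nn : ∀ a, 0 ≤ r0 a := fun a => prob_nonneg' μ _ _
  have hr1nn : ∀ a, 0 ≤ r1 a := fun a => prob_nonneg' μ _ _
  have key : ∑ a, (Real.negMulLog (r0 a / 2) + Real.negMulLog (r0 a / 2 + r1 a)
      - Real.negMulLog (r1 a / 2) - Real.negMulLog (r0 a + r1 a / 2)) ≤ fskew η := by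
    rcases eq_or_lt_of_le hη0 with h0 | h0
    · -- η = 0 : all r0 a vanish, equality holds
      have hz : ∀ a ∈ Finset.univ, r0 a = 0 := by
        have := hsum_r0
        rw [← h0] at this
        exact fun a ha =>
          (Finset.sum_eq_zero_iff_of_nonneg (fun a _ => hr0nn a)).mp this a ha
      refine le_of_eq ?_
      calc ∑ a, (Real.negMulLog (r0 a / 2) + Real.negMulLog (r0 a / 2 + r1 a)
            - Real.negMulLog (r1 a / 2) - Real.negMulLog (r0 a + r1 a / 2))
          = ∑ a, r1 a * fskew 0 := by
            refine Finset.sum_congr rfl fun a ha => ?_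
            rw [hz a ha]
            exact per_point_zero (r1 a)
        _ = fskew η := by
            rw [← Finset.sum_mul, hsum_r1, ← h0]
            ring
    · -- η > 0
      calc ∑ a, (Real.negMulLog (r0 a / 2) + Real.negMulLog (r0 a / 2 + r1 a)
            - Real.negMulLog (r1 a / 2) - Real.negMulLog (r0 a + r1 a / 2))
          ≤ ∑ a, ((r0 a + r1 a) * fskew η + cSlope η * (r0 a - (r0 a + r1 a) * η)) :=
            Finset.sum_le_sum fun a _ => per_point h0 hη (hr0nn a) (hr1nn a)
        _ = fskew η := by
            rw [Finset.sum_add_distrib, ← Finset.sum_mul, hVtot, ← Finset.mul_sum,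
              Finset.sum_sub_distrib, ← Finset.sum_mul, hVtot, hsum_r0]
            ring
  have hfs : fskew η = Real.negMulLog (η / 2) + Real.negMulLog (1 - η / 2)
      - Real.negMulLog ((1 - η) / 2) - Real.negMulLog ((1 + η) / 2) := by
    unfold fskew binH
    rw [show (1 - (1 - η) / 2 : ℝ) = (1 + η) / 2 by ring]
    ring
  have hsplit : ∑ a, (Real.negMulLog (r0 a / 2) + Real.negMulLog (r0 a / 2 + r1 a)
      - Real.negMulLog (r1 a / 2) - Real.negMulLog (r0 a + r1 a / 2))
      = ∑ a, (Real.negMulLog (r0 a / 2 + r1 a) + Real.negMulLog (r0 a / 2))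
        - ∑ a, (Real.negMulLog (r1 a / 2) + Real.negMulLog (r0 a + r1 a / 2)) := by
    rw [← Finset.sum_sub_distrib]
    refine Finset.sum_congr rfl fun a _ => ?_
    ring
  unfold mutualInfo
  rw [hEY1, hEY2, hEVY1, hEVY2]
  rw [hsplit] at key
  rw [hfs] at key
  linarith
end
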